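/- Let ψ be a unital linear functional on ℂ⟨x₁, x₂, …⟩. Then there exists a unique sequence of elements A₀, A₁, A₂, … of ℂ⟨x₁, x₂, …⟩ such that A₀ = 1 and, for every k ≥ 1: ψ(Aₖ) = 0, and for every i ≥ 1, (id ⊗ ψ)(∂ᵢ Aₖ) = A_{k−1} if i = k and (id ⊗ ψ)(∂ᵢ Aₖ) = 0 if i ≠ k. (These are the free Appell polynomials A^ψ(x₁, …, xₖ) of ψ.) -/

import Mathlib

open TensorProduct

/-- The product `x_{u(1)} ⋯ x_{u(n)}` of generators of the free algebra along a word. -/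
noncomputable def wordProd (l : List ℕ) : FreeAlgebra ℂ ℕ :=
  (l.map (FreeAlgebra.ι ℂ)).prod

/-- The partial difference quotient `∂ᵢ`, the ℂ-linear map determined on the basis of
words by `∂ᵢ(x_{u(1)}⋯x_{u(n)}) = Σ_{j : u(j) = i} x_{u(1)}⋯x_{u(j−1)} ⊗ x_{u(j+1)}⋯x_{u(n)}`
(here `i` indexes the generator `FreeAlgebra.ι ℂ i`). -/
noncomputable def dq (i : ℕ) :
    FreeAlgebra ℂ ℕ →ₗ[ℂ] FreeAlgebra ℂ ℕ ⊗[ℂ] FreeAlgebra ℂ ℕ :=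
  (FreeAlgebra.basisFreeMonoid ℂ ℕ).constr ℂ fun w =>
    ∑ j ∈ Finset.range (FreeMonoid.toList w).length,
      if (FreeMonoid.toList w).getD j 0 = i then
        wordProd ((FreeMonoid.toList w).take j) ⊗ₜ[ℂ]
          wordProd ((FreeMonoid.toList w).drop (j + 1))
      else 0

/-- The map `(id ⊗ ψ) : a ⊗ b ↦ ψ(b)·a`. -/
noncomputable def idTensor (ψ : FreeAlgebra ℂ ℕ →ₗ[ℂ] ℂ) :
    FreeAlgebra ℂ ℕ ⊗[ℂ] FreeAlgebra ℂ ℕ →ₗ[ℂ] FreeAlgebra ℂ ℕ :=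
  TensorProduct.lift
    { toFun := fun a => ψ.smulRight a
      map_add' := by intro a b; ext c; simp
      map_smul' := by
        intro c a
        ext b
        simp only [LinearMap.smulRight_apply, LinearMap.smul_apply, RingHom.id_apply]
        rw [smul_comm] }

/-- The map `(ψ ⊗ id) : a ⊗ b ↦ ψ(a)·b`. -/
noncomputable def tensorId (ψ : FreeAlgebra ℂ ℕ →ₗ[ℂ] ℂ) :
    FreeAlgebra ℂ ℕ ⊗[ℂ] FreeAlgebra ℂ ℕ →ₗ[ℂ] FreeAlgebra ℂ ℕ :=
  TensorProduct.lift
    { toFun := fun a => ψ a • (LinearMap.id : FreeAlgebra ℂ ℕ →ₗ[ℂ] FreeAlgebra ℂ ℕ)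
      map_add' := by intro a b; simp [add_smul]
      map_smul' := by intro c a; simp [smul_smul] }

/-! ### Auxiliary lemmas -/

theorem wordProd_nil : wordProd [] = 1 := rfl

theorem wordProd_cons (a : ℕ) (t : List ℕ) :
    wordProd (a :: t) = FreeAlgebra.ι ℂ a * wordProd t := by simp [wordProd]

theorem wordProd_append (l₁ l₂ : List ℕ) :
    wordProd (l₁ ++ l₂) = wordProd l₁ * wordProd l₂ := by
  simp [wordProd]

theorem wordProd_mul_ι (l : List ℕ) (m : ℕ) :
    wordProd l * FreeAlgebra.ι ℂ m = wordProd (l ++ [m]) := by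
  rw [wordProd_append]; simp [wordProd]

theorem equiv_wordProd (l : List ℕ) :
    FreeAlgebra.equivMonoidAlgebraFreeMonoid (wordProd l)
      = (MonoidAlgebra.single (FreeMonoid.ofList l) (1:ℂ)) := by
  induction l with
  | nil => simp [wordProd_nil, MonoidAlgebra.one_def]
  | cons a t ih =>
      rw [wordProd_cons, map_mul, ih]
      rw [show FreeAlgebra.equivMonoidAlgebraFreeMonoid (FreeAlgebra.ι ℂ a)
          = MonoidAlgebra.single (FreeMonoid.of a) (1:ℂ) by
        simp [FreeAlgebra.equivMonoidAlgebraFreeMonoid]]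
      rw [MonoidAlgebra.single_mul_single, one_mul]
      rfl

theorem basis_eq_wordProd (w : FreeMonoid ℕ) :
    FreeAlgebra.basisFreeMonoid ℂ ℕ w = wordProd (FreeMonoid.toList w) := by
  simp only [FreeAlgebra.basisFreeMonoid, Module.Basis.map_apply, Finsupp.coe_basisSingleOne,
    AlgEquiv.toLinearEquiv_apply]
  apply (FreeAlgebra.equivMonoidAlgebraFreeMonoid (R := ℂ) (X := ℕ)).injective
  rw [equiv_wordProd, FreeMonoid.ofList_toList]
  simp [MonoidAlgebra.coeffLinearEquiv]

theorem wordProd_eq_basis (l : List ℕ) :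
    wordProd l = FreeAlgebra.basisFreeMonoid ℂ ℕ (FreeMonoid.ofList l) := by
  rw [basis_eq_wordProd, FreeMonoid.toList_ofList]

theorem one_eq_basis : (1 : FreeAlgebra ℂ ℕ) = FreeAlgebra.basisFreeMonoid ℂ ℕ 1 := by
  rw [show (1 : FreeMonoid ℕ) = FreeMonoid.ofList [] from rfl, ← wordProd_eq_basis, wordProd_nil]

theorem idTensor_tmul (ψ : FreeAlgebra ℂ ℕ →ₗ[ℂ] ℂ) (a b : FreeAlgebra ℂ ℕ) :
    idTensor ψ (a ⊗ₜ[ℂ] b) = ψ b • a := by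
  simp [idTensor]

theorem dq_wordProd (i : ℕ) (l : List ℕ) :
    dq i (wordProd l) = ∑ j ∈ Finset.range l.length,
      if l.getD j 0 = i then wordProd (l.take j) ⊗ₜ[ℂ] wordProd (l.drop (j+1)) else 0 := by
  rw [wordProd_eq_basis, dq, Module.Basis.constr_basis]
  simp [FreeMonoid.toList_ofList]

theorem dq_one (i : ℕ) : dq i (1 : FreeAlgebra ℂ ℕ) = 0 := by
  rw [show (1 : FreeAlgebra ℂ ℕ) = wordProd [] from rfl, dq_wordProd]
  simp

theorem D_wordProd (ψ : FreeAlgebra ℂ ℕ →ₗ[ℂ] ℂ) (i : ℕ) (l : List ℕ) :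
    idTensor ψ (dq i (wordProd l)) = ∑ j ∈ Finset.range l.length,
      if l.getD j 0 = i then ψ (wordProd (l.drop (j+1))) • wordProd (l.take j) else 0 := by
  rw [dq_wordProd, map_sum]
  refine Finset.sum_congr rfl fun j _ => ?_
  split <;> simp [idTensor_tmul]

/-- The convolution inverse of `ψ` with respect to deconcatenation, as a function on words. -/
noncomputable def psibar (ψ : FreeAlgebra ℂ ℕ →ₗ[ℂ] ℂ) : List ℕ → ℂ
  | [] => 1
  | a :: t => -∑ j ∈ Finset.range (t.length + 1),
      ψ (wordProd ((a :: t).take (j+1))) * psibar ψ (t.drop j)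
  termination_by l => l.length
  decreasing_by simp [List.length_drop]

theorem psibar_sum (ψ : FreeAlgebra ℂ ℕ →ₗ[ℂ] ℂ) (hψ1 : ψ 1 = 1) (l : List ℕ) :
    ∑ j ∈ Finset.range (l.length + 1),
      ψ (wordProd (l.take j)) * psibar ψ (l.drop j) = if l = [] then 1 else 0 := by
  cases l with
  | nil => simp [psibar, wordProd, hψ1]
  | cons a t =>
      rw [Finset.sum_range_succ']
      simp only [List.take_zero, List.drop_zero]
      rw [show wordProd [] = 1 from rfl, hψ1, one_mul]
      rw [show psibar ψ (a :: t) = -∑ j ∈ Finset.range (t.length + 1),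
          ψ (wordProd ((a :: t).take (j+1))) * psibar ψ (t.drop j) from by rw [psibar]]
      simp only [List.length_cons]
      simp only [List.drop_succ_cons]
      simp

/-- The "Appell transform" `B = (id ⊗ ψ̄) ∘ Δ` where `Δ` is deconcatenation. -/
noncomputable def Blin (ψ : FreeAlgebra ℂ ℕ →ₗ[ℂ] ℂ) :
    FreeAlgebra ℂ ℕ →ₗ[ℂ] FreeAlgebra ℂ ℕ :=
  (FreeAlgebra.basisFreeMonoid ℂ ℕ).constr ℂ fun w =>
    ∑ j ∈ Finset.range ((FreeMonoid.toList w).length + 1),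
      psibar ψ ((FreeMonoid.toList w).drop j) • wordProd ((FreeMonoid.toList w).take j)

theorem Blin_wordProd (ψ : FreeAlgebra ℂ ℕ →ₗ[ℂ] ℂ) (l : List ℕ) :
    Blin ψ (wordProd l) = ∑ j ∈ Finset.range (l.length + 1),
      psibar ψ (l.drop j) • wordProd (l.take j) := by
  rw [wordProd_eq_basis, Blin, Module.Basis.constr_basis]
  simp [FreeMonoid.toList_ofList]
section
theorem key_word' (ψ : FreeAlgebra ℂ ℕ →ₗ[ℂ] ℂ) (hψ1 : ψ 1 = 1) (i m : ℕ) (l : List ℕ) :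
    idTensor ψ (dq i (Blin ψ (wordProd l * FreeAlgebra.ι ℂ m)))
      = if i = m then wordProd l else 0 := by
  set l' : List ℕ := l ++ [m] with hl'
  have hlen : l'.length = l.length + 1 := by simp [hl']
  rw [wordProd_mul_ι, Blin_wordProd, map_sum, map_sum, hlen]
  simp only [map_smul, D_wordProd]
  have step1 : ∀ j ∈ Finset.range (l.length + 1 + 1),
      (psibar ψ (l'.drop j) • ∑ q ∈ Finset.range (l'.take j).length,
        if (l'.take j).getD q 0 = i then
          ψ (wordProd ((l'.take j).drop (q+1))) • wordProd ((l'.take j).take q) else 0)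
      = ∑ q ∈ Finset.range j,
          (if l'.getD q 0 = i then
            (psibar ψ (l'.drop j) * ψ (wordProd ((l'.drop (q+1)).take (j-(q+1))))) •
              wordProd (l'.take q) else 0) := by
    intro j hj
    rw [Finset.mem_range] at hj
    have hjle : j ≤ l'.length := by omega
    rw [Finset.smul_sum]
    rw [List.length_take, min_eq_left hjle]
    refine Finset.sum_congr rfl fun q hq => ?_
    rw [Finset.mem_range] at hq
    have h1 : (l'.take j).getD q 0 = l'.getD q 0 := by
      rw [List.getD_eq_getElem?_getD, List.getD_eq_getElem?_getD, List.getElem?_take, if_pos hq]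
    have h2 : (l'.take j).take q = l'.take q := by
      rw [List.take_take, min_eq_left (le_of_lt hq)]
    have h3 : (l'.take j).drop (q+1) = (l'.drop (q+1)).take (j-(q+1)) := List.drop_take
    rw [h1, h2, h3]
    split
    · rw [smul_smul]
    · rw [smul_zero]
  rw [Finset.sum_congr rfl step1]
  simp only [Finset.range_eq_Ico]
  rw [← Finset.sum_Ico_Ico_comm' 0 (l.length + 2)
    (fun q j => if l'.getD q 0 = i then
      (psibar ψ (l'.drop j) * ψ (wordProd ((l'.drop (q+1)).take (j-(q+1))))) •
        wordProd (l'.take q) else 0)]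
  have step3 : ∀ q ∈ Finset.Ico 0 (l.length + 2),
      (∑ j ∈ Finset.Ico (q+1) (l.length+2),
        if l'.getD q 0 = i then
          (psibar ψ (l'.drop j) * ψ (wordProd ((l'.drop (q+1)).take (j-(q+1))))) •
            wordProd (l'.take q) else 0)
      = if q = l.length then
          (if l'.getD q 0 = i then wordProd (l'.take q) else 0) else 0 := by
    intro q hq
    rw [Finset.mem_Ico] at hq
    by_cases hP : l'.getD q 0 = i
    · simp only [if_pos hP]
      rw [← Finset.sum_smul]
      have hsc : (∑ j ∈ Finset.Ico (q+1) (l.length+2),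
          psibar ψ (l'.drop j) * ψ (wordProd ((l'.drop (q+1)).take (j-(q+1)))))
          = if q = l.length then 1 else 0 := by
        rcases Nat.lt_or_ge q (l.length + 1) with hqle | hqgt
        · have hqle' : q ≤ l.length := by omega
          rw [Finset.sum_Ico_eq_sum_range]
          have hv : (l'.drop (q+1)).length = l.length - q := by
            rw [List.length_drop, hlen]; omega
          have harith : l.length + 2 - (q+1) = (l'.drop (q+1)).length + 1 := by omega
          rw [harith]
          have hterm : ∀ s, psibar ψ (l'.drop (q+1+s)) *
              ψ (wordProd ((l'.drop (q+1)).take (q+1+s-(q+1))))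
              = ψ (wordProd ((l'.drop (q+1)).take s)) * psibar ψ ((l'.drop (q+1)).drop s) := by
            intro s
            rw [show q+1+s-(q+1) = s by omega, List.drop_drop,
              show q + 1 + s = (q+1) + s by omega, mul_comm]
          rw [Finset.sum_congr rfl fun s _ => hterm s]
          rw [psibar_sum ψ hψ1]
          have : (l'.drop (q+1) = []) ↔ q = l.length := by
            rw [← List.length_eq_zero_iff, hv]; omega
          simp only [this]
        · have : q = l.length + 1 := by omega
          subst this
          rw [show Finset.Ico (l.length+1+1) (l.length+2) = ∅ by
            apply Finset.Ico_self]
          simp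
      rw [hsc]
      split <;> simp
    · rw [Finset.sum_congr rfl (fun j _ => if_neg hP), Finset.sum_const_zero,
        if_neg hP]
      simp
  rw [Finset.sum_congr rfl step3]
  rw [Finset.sum_ite_eq' (Finset.Ico 0 (l.length + 2)) l.length]
  have hmem : l.length ∈ Finset.Ico 0 (l.length + 2) := by simp
  rw [if_pos hmem]
  have hgd : l'.getD l.length 0 = m := by
    rw [List.getD_eq_getElem?_getD, hl', List.getElem?_concat_length]
    rfl
  have htk : l'.take l.length = l := by rw [hl']; exact List.take_left
  rw [hgd, htk]
  simp only [eq_comm]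
end

theorem key_lin (ψ : FreeAlgebra ℂ ℕ →ₗ[ℂ] ℂ) (hψ1 : ψ 1 = 1) (i m : ℕ)
    (p : FreeAlgebra ℂ ℕ) :
    idTensor ψ (dq i (Blin ψ (p * FreeAlgebra.ι ℂ m))) = if i = m then p else 0 := by
  have h : ((idTensor ψ).comp ((dq i).comp ((Blin ψ).comp
      (LinearMap.mulRight ℂ (FreeAlgebra.ι ℂ m)))))
      = (if i = m then (LinearMap.id : FreeAlgebra ℂ ℕ →ₗ[ℂ] FreeAlgebra ℂ ℕ) else 0) := by
    apply Module.Basis.ext (FreeAlgebra.basisFreeMonoid ℂ ℕ)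
    intro w
    simp only [LinearMap.comp_apply, LinearMap.mulRight_apply, basis_eq_wordProd]
    rw [key_word' ψ hψ1]
    split <;> simp
  have h2 := LinearMap.congr_fun h p
  simp only [LinearMap.comp_apply, LinearMap.mulRight_apply] at h2
  rw [h2]
  split <;> rfl

theorem repr_wordProd (u : List ℕ) :
    (FreeAlgebra.basisFreeMonoid ℂ ℕ).repr (wordProd u)
      = Finsupp.single (FreeMonoid.ofList u) 1 := by
  rw [wordProd_eq_basis]
  exact (FreeAlgebra.basisFreeMonoid ℂ ℕ).repr_self _

open scoped Classical in
theorem coeff_D (ψ : FreeAlgebra ℂ ℕ →ₗ[ℂ] ℂ) (hψ1 : ψ 1 = 1) (v : List ℕ) (i : ℕ)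
    (w : FreeMonoid ℕ) (hlen : (FreeMonoid.toList w).length ≤ v.length + 1) :
    (FreeAlgebra.basisFreeMonoid ℂ ℕ).repr
        (idTensor ψ (dq i (FreeAlgebra.basisFreeMonoid ℂ ℕ w))) (FreeMonoid.ofList v)
      = if w = FreeMonoid.ofList (v ++ [i]) then 1 else 0 := by
  classical
  set b := FreeAlgebra.basisFreeMonoid ℂ ℕ with hb
  set t := FreeMonoid.toList w with ht
  have hw : w = FreeMonoid.ofList t := by rw [ht, FreeMonoid.ofList_toList]
  rw [basis_eq_wordProd, ← ht, D_wordProd, map_sum, Finsupp.coe_finset_sum, Finset.sum_apply]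
  have hterm : ∀ q ∈ Finset.range t.length,
      (b.repr (if t.getD q 0 = i then ψ (wordProd (t.drop (q+1))) • wordProd (t.take q) else 0))
        (FreeMonoid.ofList v)
      = if (t.getD q 0 = i ∧ t.take q = v) then ψ (wordProd (t.drop (q+1))) else 0 := by
    intro q hq
    split
    · rename_i hC
      rw [map_smul, Finsupp.smul_apply, repr_wordProd, Finsupp.single_apply]
      by_cases hv : t.take q = v
      · have h5 : FreeMonoid.ofList (t.take q) = FreeMonoid.ofList v := by rw [hv]
        rw [if_pos h5, smul_eq_mul, mul_one, if_pos ⟨hC, hv⟩]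
      · have h5 : ¬(FreeMonoid.ofList (t.take q) = FreeMonoid.ofList v) := fun hh => hv (by
          have h6 := congrArg FreeMonoid.toList hh
          rwa [FreeMonoid.toList_ofList, FreeMonoid.toList_ofList] at h6)
        rw [if_neg h5, smul_zero, if_neg (fun hh => hv hh.2)]
    · rename_i hC
      rw [map_zero, Finsupp.coe_zero, Pi.zero_apply, if_neg (by tauto)]
  rw [Finset.sum_congr rfl hterm]
  by_cases hw0 : w = FreeMonoid.ofList (v ++ [i])
  · rw [if_pos hw0]
    have ht0 : t = v ++ [i] := by rw [ht, hw0, FreeMonoid.toList_ofList]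
    have hlt : t.length = v.length + 1 := by rw [ht0]; simp
    have hterm2 : ∀ q ∈ Finset.range t.length,
        (if (t.getD q 0 = i ∧ t.take q = v) then ψ (wordProd (t.drop (q+1))) else 0)
        = if q = v.length then 1 else 0 := by
      intro q hq
      rw [Finset.mem_range] at hq
      by_cases hqv : q = v.length
      · have h1 : t.getD q 0 = i := by
          rw [ht0, List.getD_eq_getElem?_getD, hqv, List.getElem?_concat_length]; rfl
        have h2 : t.take q = v := by rw [ht0, hqv]; exact List.take_left
        rw [if_pos ⟨h1, h2⟩, if_pos hqv]
        rw [show t.drop (q+1) = [] from by rw [List.drop_eq_nil_iff]; omega]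
        rw [wordProd_nil, hψ1]
      · rw [if_neg, if_neg hqv]
        rintro ⟨-, h2⟩
        apply hqv
        have := congrArg List.length h2
        rw [List.length_take] at this
        omega
    rw [Finset.sum_congr rfl hterm2, Finset.sum_ite_eq' (Finset.range t.length) v.length]
    rw [if_pos (by rw [Finset.mem_range]; omega)]
  · rw [if_neg hw0]
    have hterm3 : ∀ q ∈ Finset.range t.length,
        (if (t.getD q 0 = i ∧ t.take q = v) then ψ (wordProd (t.drop (q+1))) else 0) = 0 := by
      intro q hq
      rw [Finset.mem_range] at hq
      rw [if_neg]
      rintro ⟨h1, h2⟩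
      apply hw0
      have hq' : q = v.length := by
        have := congrArg List.length h2
        rw [List.length_take] at this
        omega
      have hlt : t.length = q + 1 := by omega
      have htt : t = v ++ [i] := by
        have h3 : t.take (q+1) = t := by
          rw [List.take_of_length_le]; omega
        have h4 : t.take (q+1) = t.take q ++ [t.getD q 0] := by
          rw [List.take_succ, List.getD_eq_getElem?_getD]
          congr 1
          rw [List.getElem?_eq_getElem hq]
          rfl
        rw [← h3, h4, h2, h1]
      rw [hw, htt]
    rw [Finset.sum_congr rfl hterm3, Finset.sum_const_zero]

theorem inj_lemma (ψ : FreeAlgebra ℂ ℕ →ₗ[ℂ] ℂ) (hψ1 : ψ 1 = 1) (p : FreeAlgebra ℂ ℕ)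
    (hD : ∀ i, idTensor ψ (dq i p) = 0) (hψp : ψ p = 0) : p = 0 := by
  classical
  by_contra hp
  set b := FreeAlgebra.basisFreeMonoid ℂ ℕ with hb
  set r := b.repr p with hr
  have hr0 : r ≠ 0 := fun h => hp ((LinearEquiv.map_eq_zero_iff _).mp (by rw [← hr, h]))
  have hsupp : r.support.Nonempty := Finsupp.support_nonempty_iff.mpr hr0
  obtain ⟨w₀, hw₀mem, hw₀len⟩ := Finset.exists_mem_eq_sup r.support hsupp
    (fun w => (FreeMonoid.toList w).length)
  have hmax : ∀ w ∈ r.support, (FreeMonoid.toList w).length ≤ (FreeMonoid.toList w₀).length := by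
    intro w hw
    rw [← hw₀len]
    exact Finset.le_sup hw
  have hp_eq : ∑ w ∈ r.support, r w • b w = p := by
    conv_rhs => rw [← b.linearCombination_repr p]
    rw [Finsupp.linearCombination_apply, Finsupp.sum]
  rcases List.eq_nil_or_concat (FreeMonoid.toList w₀) with hnil | ⟨v, i, hvi⟩
  · -- all words in support are empty
    have hone : ∀ w ∈ r.support, w = (1 : FreeMonoid ℕ) := by
      intro w hw
      have h1 : (FreeMonoid.toList w).length = 0 := by
        have := hmax w hw
        rw [hnil] at this
        simpa using this
      have h2 : FreeMonoid.toList w = [] := List.length_eq_zero_iff.mp h1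
      rw [← FreeMonoid.ofList_toList w, h2]
      rfl
    have hps : p = r 1 • b 1 := by
      rw [← hp_eq]
      by_cases h1 : (1 : FreeMonoid ℕ) ∈ r.support
      · exact Finset.sum_eq_single_of_mem 1 h1 (fun w hw hne => absurd (hone w hw) hne)
      · have hz : r 1 = 0 := Finsupp.notMem_support_iff.mp h1
        rw [hz, zero_smul]
        apply Finset.sum_eq_zero
        intro w hw
        exact absurd (hone w hw) (by rintro rfl; exact h1 hw)
    have hψr : ψ p = r 1 := by
      rw [hps, map_smul, hb, ← one_eq_basis, hψ1, smul_eq_mul, mul_one]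
    apply hp
    rw [hps, ← hψr, hψp, zero_smul]
  · -- w₀ = v ++ [i]; look at the coefficient of v in D_i p
    rw [List.concat_eq_append] at hvi
    have hw₀ : w₀ = FreeMonoid.ofList (v ++ [i]) := by
      rw [← FreeMonoid.ofList_toList w₀, hvi]
    have h0 : (b.repr (idTensor ψ (dq i p))) (FreeMonoid.ofList v) = 0 := by
      rw [hD i]
      simp
    rw [← hp_eq, map_sum, map_sum, map_sum, Finsupp.finset_sum_apply] at h0
    have hterm : ∀ w ∈ r.support,
        (b.repr (idTensor ψ (dq i (r w • b w)))) (FreeMonoid.ofList v)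
          = if w = w₀ then r w else 0 := by
      intro w hw
      rw [map_smul, map_smul, map_smul, Finsupp.smul_apply, coeff_D ψ hψ1 v i w
        (by
          have h1 := hmax w hw
          rw [hvi] at h1
          simpa using h1), ← hw₀]
      split <;> simp
    rw [Finset.sum_congr rfl hterm, Finset.sum_ite_eq' r.support w₀, if_pos hw₀mem] at h0
    exact (Finsupp.mem_support_iff.mp hw₀mem) h0

/-- The free Appell sequence associated to `ψ`. -/
noncomputable def appell (ψ : FreeAlgebra ℂ ℕ →ₗ[ℂ] ℂ) : ℕ → FreeAlgebra ℂ ℕ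
  | 0 => 1
  | (k+1) => Blin ψ (appell ψ k * FreeAlgebra.ι ℂ k)
      - ψ (Blin ψ (appell ψ k * FreeAlgebra.ι ℂ k)) • 1

theorem free_appell_exists_unique (ψ : FreeAlgebra ℂ ℕ →ₗ[ℂ] ℂ) (hψ1 : ψ 1 = 1) :
    ∃! A : ℕ → FreeAlgebra ℂ ℕ, A 0 = 1 ∧
      ∀ k, 1 ≤ k → ψ (A k) = 0 ∧
        ∀ i : ℕ, idTensor ψ (dq i (A k)) = if i + 1 = k then A (k - 1) else 0 := by
  classical
  have happ_psi : ∀ k : ℕ, ψ (appell ψ (k+1)) = 0 := by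
    intro k
    rw [show appell ψ (k+1) = Blin ψ (appell ψ k * FreeAlgebra.ι ℂ k)
      - ψ (Blin ψ (appell ψ k * FreeAlgebra.ι ℂ k)) • 1 from rfl]
    rw [map_sub, map_smul, hψ1, smul_eq_mul, mul_one, sub_self]
  have happ_D : ∀ k i, idTensor ψ (dq i (appell ψ (k+1)))
      = if i = k then appell ψ k else 0 := by
    intro k i
    rw [show appell ψ (k+1) = Blin ψ (appell ψ k * FreeAlgebra.ι ℂ k)
      - ψ (Blin ψ (appell ψ k * FreeAlgebra.ι ℂ k)) • 1 from rfl]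
    rw [map_sub, map_sub, map_smul, map_smul, dq_one, map_zero, smul_zero, sub_zero]
    exact key_lin ψ hψ1 i k (appell ψ k)
  have hprop : ∀ (A : ℕ → FreeAlgebra ℂ ℕ), A = appell ψ →
      (A 0 = 1 ∧ ∀ k, 1 ≤ k → ψ (A k) = 0 ∧
        ∀ i : ℕ, idTensor ψ (dq i (A k)) = if i + 1 = k then A (k - 1) else 0) := by
    rintro A rfl
    refine ⟨rfl, ?_⟩
    intro k hk
    obtain ⟨k', rfl⟩ : ∃ k', k = k' + 1 := ⟨k - 1, by omega⟩
    refine ⟨happ_psi k', ?_⟩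
    intro i
    rw [happ_D k' i, show k' + 1 - 1 = k' from rfl]
    by_cases h : i = k'
    · rw [if_pos h, if_pos (by omega)]
    · rw [if_neg h, if_neg (by omega)]
  refine ⟨appell ψ, hprop (appell ψ) rfl, ?_⟩
  intro A hA
  funext k
  induction k with
  | zero => rw [hA.1]; rfl
  | succ n ih =>
      have hD : ∀ i, idTensor ψ (dq i (A (n+1) - appell ψ (n+1))) = 0 := by
        intro i
        rw [map_sub, map_sub, (hA.2 (n+1) (by omega)).2 i, happ_D n i,
          show n + 1 - 1 = n from rfl, ih]
        by_cases h : i = n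
        · rw [if_pos h, if_pos (by omega), sub_self]
        · rw [if_neg h, if_neg (by omega), sub_self]
      have hps : ψ (A (n+1) - appell ψ (n+1)) = 0 := by
        rw [map_sub, (hA.2 (n+1) (by omega)).1, happ_psi n, sub_self]
      have := inj_lemma ψ hψ1 _ hD hps
      exact sub_eq_zero.mp this
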